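/- Let ρ_{st} : L^p(F_t) → L^p(F_s) be monotone and F_s-translation invariant. Then time-consistency of the family (ρ_{st}) is equivalent to the order-preserving property: for all r ≤ s ≤ t and all X, Y ∈ L^p(F_t), ρ_{st}(X) ≥ ρ_{st}(Y) a.s. implies ρ_{rt}(X) ≥ ρ_{rt}(Y) a.s. -/

import Mathlib

open MeasureTheory
open scoped ENNReal

/-- Membership in `L^p` of a sub-σ-algebra. -/
def MemLpF {Ω : Type*} (m : MeasurableSpace Ω) {m' : MeasurableSpace Ω} (p : ℝ≥0∞)
    (P : Measure Ω) (X : Ω → ℝ) : Prop :=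
  Measurable[m] X ∧ MeasureTheory.MemLp X p P

/-- for a monotone, `F_s`-translation invariant fully-dynamic
family `(ρ_{st})`, time-consistency is equivalent to the order-preserving
property. -/
theorem stmt4 {Ω : Type*} {m0 : MeasurableSpace Ω} (P : Measure Ω) [IsProbabilityMeasure P]
    (T : ℝ) (hT : 0 ≤ T) (p : ℝ≥0∞) (hp : 1 ≤ p)
    (F : ℝ → MeasurableSpace Ω) (hFmono : ∀ s t, s ≤ t → F s ≤ F t)
    (hFle : ∀ t, F t ≤ m0)
    (ρ : ℝ → ℝ → (Ω → ℝ) → (Ω → ℝ))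
    (hmaps : ∀ s t, 0 ≤ s → s ≤ t → t ≤ T →
      ∀ X : Ω → ℝ, MemLpF (F t) p P X → MemLpF (F s) p P (ρ s t X))
    (hmono : ∀ s t, 0 ≤ s → s ≤ t → t ≤ T →
      ∀ X Y : Ω → ℝ, MemLpF (F t) p P X → MemLpF (F t) p P Y →
        (∀ᵐ ω ∂P, Y ω ≤ X ω) → ∀ᵐ ω ∂P, ρ s t X ω ≤ ρ s t Y ω)
    (htrans : ∀ s t, 0 ≤ s → s ≤ t → t ≤ T →
      ∀ X f : Ω → ℝ, MemLpF (F t) p P X → MemLpF (F s) p P f →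
        ρ s t (X + f) =ᵐ[P] ρ s t X - f) :
    (∀ r s t, 0 ≤ r → r ≤ s → s ≤ t → t ≤ T →
        ∀ X Y : Ω → ℝ, MemLpF (F t) p P X → MemLpF (F t) p P Y →
          ρ s t X =ᵐ[P] ρ s t Y → ρ r t X =ᵐ[P] ρ r t Y)
      ↔
    (∀ r s t, 0 ≤ r → r ≤ s → s ≤ t → t ≤ T →
        ∀ X Y : Ω → ℝ, MemLpF (F t) p P X → MemLpF (F t) p P Y →
          (∀ᵐ ω ∂P, ρ s t Y ω ≤ ρ s t X ω) → ∀ᵐ ω ∂P, ρ r t Y ω ≤ ρ r t X ω) := by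
  constructor
  · intro hTC r s t hr hrs hst hT' X Y hX hY hle
    have h0s : 0 ≤ s := le_trans hr hrs
    -- f = ρ s t X - ρ s t Y ∈ L^p(F_s), f ≥ 0 a.e.
    set f : Ω → ℝ := ρ s t X - ρ s t Y with hf
    have hρX := hmaps s t h0s hst hT' X hX
    have hρY := hmaps s t h0s hst hT' Y hY
    have hfmem : MemLpF (F s) p P f := ⟨hρX.1.sub hρY.1, hρX.2.sub hρY.2⟩
    -- Z = X + f ∈ L^p(F_t)
    have hZmem : MemLpF (F t) p P (X + f) :=
      ⟨hX.1.add (hfmem.1.mono (hFmono s t hst) le_rfl),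
       hX.2.add ((memLp_congr_ae (ae_eq_refl f)).mp hfmem.2)⟩
    -- ρ s t (X + f) = ρ s t X - f = ρ s t Y
    have h1 : ρ s t (X + f) =ᵐ[P] ρ s t Y := by
      refine (htrans s t h0s hst hT' X f hX hfmem).trans ?_
      filter_upwards with ω
      simp [hf, Pi.sub_apply]
    have h2 : ρ r t (X + f) =ᵐ[P] ρ r t Y :=
      hTC r s t hr hrs hst hT' (X + f) Y hZmem hY h1
    -- X ≤ X + f a.e., so ρ r t (X + f) ≤ ρ r t X
    have h3 : ∀ᵐ ω ∂P, ρ r t (X + f) ω ≤ ρ r t X ω := by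
      refine hmono r t hr (le_trans hrs hst) hT' (X + f) X hZmem hX ?_
      filter_upwards [hle] with ω hω
      simp only [Pi.add_apply, hf, Pi.sub_apply]
      linarith
    filter_upwards [h2, h3] with ω h2 h3
    rw [← h2]; exact h3
  · intro hOP r s t hr hrs hst hT' X Y hX hY heq
    have h1 := hOP r s t hr hrs hst hT' X Y hX hY
      (heq.mono fun ω h => le_of_eq h.symm)
    have h2 := hOP r s t hr hrs hst hT' Y X hY hX
      (heq.mono fun ω h => le_of_eq h)
    filter_upwards [h1, h2] with ω h1 h2
    exact le_antisymm h2 h1
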